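/- The simplicial discus B† on a boundary cycle of length k ≥ 3 is (3,6)-tight: 3|V(B†)| - |E(B†)| = 6 and every subgraph with at least two edges J' satisfies 3|V(J')| - |E(J')| ≥ 6. -/

import Mathlib

open SimpleGraph

/-- The simplicial discus on a boundary cycle of length `k`: the vertices are
the `k` cycle vertices (`Sum.inl i`) together with two poles (`Sum.inr p`);
consecutive cycle vertices are adjacent, each pole is adjacent to every cycle
vertex, and the two poles are not adjacent. -/
def discus (k : ℕ) [NeZero k] : SimpleGraph (Fin k ⊕ Fin 2) where
  Adj x y :=
    match x, y with
    | Sum.inl i, Sum.inl j => i ≠ j ∧ (j = i + 1 ∨ i = j + 1)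
    | Sum.inl _, Sum.inr _ => True
    | Sum.inr _, Sum.inl _ => True
    | Sum.inr _, Sum.inr _ => False
  symm := by
    refine ⟨?_⟩
    rintro (i | p) (j | q) h
    · exact ⟨Ne.symm h.1, Or.symm h.2⟩
    · trivial
    · trivial
    · exact h.elim
  loopless := by
    refine ⟨?_⟩
    rintro (i | p) h
    · exact h.1 rfl
    · exact h

/-- `(3,6)`-sparsity for a simple graph: every subgraph with at least two edges
has freedom number `3|V'| - |E'|` at least `6`. -/
def Sparse36 {V : Type} (G : SimpleGraph V) : Prop :=
  ∀ H : G.Subgraph, 2 ≤ H.edgeSet.ncard →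
    (6 : ℤ) ≤ 3 * (H.verts.ncard : ℤ) - (H.edgeSet.ncard : ℤ)

namespace DiscusAux

variable {k : ℕ} [NeZero k]

lemma fin_one_ne (hk : 3 ≤ k) : (1 : Fin k) ≠ 0 := by
  intro h
  have := congrArg Fin.val h
  rw [Fin.val_one'] at this
  simp only [Fin.val_zero] at this
  rw [Nat.mod_eq_of_lt (by omega)] at this
  omega

lemma dsucc_ne_self (hk : 3 ≤ k) (i : Fin k) : i + 1 ≠ i := by
  intro h
  apply fin_one_ne hk
  have : i + 1 = i + 0 := by rw [add_zero]; exact h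
  exact add_left_cancel this

lemma dsucc2_ne_self (hk : 3 ≤ k) (i : Fin k) : i + 1 + 1 ≠ i := by
  intro h
  have h2 : (1 + 1 : Fin k) = 0 := by
    have : i + (1 + 1) = i + 0 := by rw [add_zero, ← add_assoc]; exact h
    exact add_left_cancel this
  have := congrArg Fin.val h2
  rw [Fin.val_add, Fin.val_one'] at this
  simp only [Fin.val_zero] at this
  rw [Nat.mod_eq_of_lt (show 1 < k by omega), Nat.mod_eq_of_lt (by omega)] at this
  omega

lemma adj_inl_inl {i j : Fin k} :
    (discus k).Adj (Sum.inl i) (Sum.inl j) ↔ i ≠ j ∧ (j = i + 1 ∨ i = j + 1) := Iff.rfl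

lemma adj_inl_inr {i : Fin k} {q : Fin 2} :
    (discus k).Adj (Sum.inl i) (Sum.inr q) := trivial

lemma not_adj_inr_inr {p q : Fin 2} :
    ¬ (discus k).Adj (Sum.inr p : Fin k ⊕ Fin 2) (Sum.inr q) := fun h => h

/-- canonical cycle edge -/
def cycEdge (i : Fin k) : Sym2 (Fin k ⊕ Fin 2) := s(Sum.inl i, Sum.inl (i + 1))

/-- canonical spoke edge -/
def spoke (p : Fin k × Fin 2) : Sym2 (Fin k ⊕ Fin 2) := s(Sum.inl p.1, Sum.inr p.2)

lemma cycEdge_injective (hk : 3 ≤ k) : Function.Injective (cycEdge (k := k)) := by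
  intro i j h
  rw [cycEdge, cycEdge, Sym2.eq_iff] at h
  rcases h with ⟨h1, _⟩ | ⟨h1, h2⟩
  · exact Sum.inl_injective h1
  · exfalso
    have hij : i = j + 1 := Sum.inl_injective h1
    have hji : i + 1 = j := Sum.inl_injective h2
    rw [← hji] at hij
    exact dsucc2_ne_self hk i hij.symm

lemma spoke_injective : Function.Injective (spoke (k := k)) := by
  intro p q h
  rw [spoke, spoke, Sym2.eq_iff] at h
  rcases h with ⟨h1, h2⟩ | ⟨h1, _⟩
  · exact Prod.ext (Sum.inl_injective h1) (Sum.inr_injective h2)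
  · exact absurd h1 (by simp)

lemma cycEdge_ne_spoke (i : Fin k) (p : Fin k × Fin 2) : cycEdge i ≠ spoke p := by
  rw [cycEdge, spoke, ne_eq, Sym2.eq_iff]
  rintro (⟨-, h⟩ | ⟨h, -⟩) <;> exact absurd h (by simp)

lemma disjoint_cyc_spoke :
    Disjoint (Set.range (cycEdge (k := k))) (Set.range (spoke (k := k))) := by
  rw [Set.disjoint_left]
  rintro e ⟨i, rfl⟩ ⟨p, hp⟩
  exact cycEdge_ne_spoke i p hp.symm

/-- Every edge of a subgraph of the discus is a canonical cycle edge with both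
endpoints in the vertex set, or a spoke with both endpoints in the vertex set. -/
lemma edge_cases (hk : 3 ≤ k) (H : (discus k).Subgraph) {e : Sym2 (Fin k ⊕ Fin 2)}
    (he : e ∈ H.edgeSet) :
    (∃ i, e = cycEdge i ∧ Sum.inl i ∈ H.verts ∧ Sum.inl (i + 1) ∈ H.verts) ∨
    (∃ p : Fin k × Fin 2, e = spoke p ∧ Sum.inl p.1 ∈ H.verts ∧ Sum.inr p.2 ∈ H.verts) := by
  induction e using Sym2.ind with
  | _ x y =>
    rw [Subgraph.mem_edgeSet] at he
    have hxv := he.fst_mem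
    have hyv := he.snd_mem
    have hadj := H.adj_sub he
    match x, y, he, hxv, hyv, hadj with
    | Sum.inl i, Sum.inl j, he, hxv, hyv, hadj =>
      rcases hadj.2 with h | h
      · exact Or.inl ⟨i, by rw [cycEdge, h], hxv, by rw [← h]; exact hyv⟩
      · refine Or.inl ⟨j, ?_, hyv, by rw [← h]; exact hxv⟩
        rw [cycEdge, ← h, Sym2.eq_swap]
    | Sum.inl i, Sum.inr q, he, hxv, hyv, _ =>
      exact Or.inr ⟨(i, q), rfl, hxv, hyv⟩
    | Sum.inr q, Sum.inl i, he, hxv, hyv, _ =>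
      exact Or.inr ⟨(i, q), Sym2.eq_swap, hyv, hxv⟩
    | Sum.inr p, Sum.inr q, he, hxv, hyv, hadj => exact absurd hadj not_adj_inr_inr

lemma edgeSet_eq (hk : 3 ≤ k) :
    (discus k).edgeSet = Set.range (cycEdge (k := k)) ∪ Set.range (spoke (k := k)) := by
  apply Set.Subset.antisymm
  · intro e he
    have := edge_cases hk (⊤ : (discus k).Subgraph) (by rwa [Subgraph.edgeSet_top])
    rcases this with ⟨i, rfl, -, -⟩ | ⟨p, rfl, -, -⟩
    · exact Or.inl ⟨i, rfl⟩
    · exact Or.inr ⟨p, rfl⟩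
  · rintro e (⟨i, rfl⟩ | ⟨p, rfl⟩)
    · rw [cycEdge, SimpleGraph.mem_edgeSet]
      exact ⟨(dsucc_ne_self hk i).symm, Or.inl rfl⟩
    · rw [spoke, SimpleGraph.mem_edgeSet]
      exact adj_inl_inr

lemma edgeSet_ncard (hk : 3 ≤ k) : (discus k).edgeSet.ncard = 3 * k := by
  rw [edgeSet_eq hk, Set.ncard_union_eq disjoint_cyc_spoke (Set.toFinite _) (Set.toFinite _),
    ← Set.image_univ, ← Set.image_univ,
    Set.ncard_image_of_injective _ (cycEdge_injective hk),
    Set.ncard_image_of_injective _ spoke_injective,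
    Set.ncard_univ, Set.ncard_univ, Nat.card_eq_fintype_card, Nat.card_eq_fintype_card]
  simp
  omega

end DiscusAux

open DiscusAux in
theorem discus_tight (k : ℕ) [NeZero k] (hk : 3 ≤ k) :
    3 * (Nat.card (Fin k ⊕ Fin 2) : ℤ) - ((discus k).edgeSet.ncard : ℤ) = 6 ∧
      Sparse36 (discus k) := by
  constructor
  · rw [edgeSet_ncard hk, Nat.card_eq_fintype_card]
    simp
    push_cast
    ring
  · intro H hE
    classical
    set A : Set (Fin k) := {i | Sum.inl i ∈ H.verts} with hA
    set P : Set (Fin 2) := {q | Sum.inr q ∈ H.verts} with hP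
    set C : Set (Sym2 (Fin k ⊕ Fin 2)) :=
      H.edgeSet ∩ Set.range (cycEdge (k := k)) with hC
    set S : Set (Sym2 (Fin k ⊕ Fin 2)) :=
      H.edgeSet ∩ Set.range (spoke (k := k)) with hS
    -- edge set splits
    have hsplit : H.edgeSet = C ∪ S := by
      apply Set.Subset.antisymm
      · intro e he
        rcases edge_cases hk H he with ⟨i, rfl, -, -⟩ | ⟨p, rfl, -, -⟩
        · exact Or.inl ⟨he, ⟨i, rfl⟩⟩
        · exact Or.inr ⟨he, ⟨p, rfl⟩⟩
      · exact Set.union_subset Set.inter_subset_left Set.inter_subset_left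
    have hdisj : Disjoint C S :=
      (disjoint_cyc_spoke.mono Set.inter_subset_right Set.inter_subset_right)
    have hecard : H.edgeSet.ncard = C.ncard + S.ncard := by
      rw [hsplit, Set.ncard_union_eq hdisj (Set.toFinite _) (Set.toFinite _)]
    -- vertex set splits
    have hverts : H.verts = Sum.inl '' A ∪ Sum.inr '' P := by
      ext x
      cases x with
      | inl i => simp [hA]
      | inr q => simp [hP]
    have hvcard : H.verts.ncard = A.ncard + P.ncard := by
      rw [hverts, Set.ncard_union_eq ?_ (Set.toFinite _) (Set.toFinite _),
        Set.ncard_image_of_injective _ Sum.inl_injective,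
        Set.ncard_image_of_injective _ Sum.inr_injective]
      rw [Set.disjoint_left]
      rintro x ⟨i, -, rfl⟩ ⟨q, -, h⟩
      exact Sum.inl_ne_inr h.symm
    -- membership of endpoints of cycle edges
    have hCmem : ∀ e ∈ C, ∃ i, e = cycEdge i ∧ i ∈ A ∧ i + 1 ∈ A := by
      rintro e ⟨he, i, rfl⟩
      have := Subgraph.mem_edgeSet.mp he
      exact ⟨i, rfl, this.fst_mem, this.snd_mem⟩
    -- c ≤ a
    have hca : C.ncard ≤ A.ncard := by
      have hsub : C ⊆ cycEdge '' A := by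
        intro e he
        obtain ⟨i, rfl, hi, -⟩ := hCmem e he
        exact ⟨i, hi, rfl⟩
      calc C.ncard ≤ (cycEdge '' A).ncard := Set.ncard_le_ncard hsub (Set.toFinite _)
        _ ≤ A.ncard := Set.ncard_image_le (Set.toFinite _)
    -- s ≤ a * p
    have hsap : S.ncard ≤ A.ncard * P.ncard := by
      have hsub : S ⊆ spoke '' (A ×ˢ P) := by
        rintro e ⟨he, p, rfl⟩
        have := Subgraph.mem_edgeSet.mp he
        exact ⟨p, ⟨this.fst_mem, this.snd_mem⟩, rfl⟩
      have h1 : S.ncard ≤ (A ×ˢ P).ncard := le_trans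
        (Set.ncard_le_ncard hsub (Set.toFinite _)) (Set.ncard_image_le (Set.toFinite _))
      have h2 : (A ×ˢ P).ncard = A.ncard * P.ncard := by
        rw [← Nat.card_coe_set_eq, ← Nat.card_coe_set_eq, ← Nat.card_coe_set_eq,
          Nat.card_congr (Equiv.Set.prod A P), Nat.card_prod]
      omega
    -- p ≤ 2
    have hp2 : P.ncard ≤ 2 := by
      have := Set.ncard_le_ncard (Set.subset_univ P) (Set.toFinite _)
      rwa [Set.ncard_univ, Nat.card_eq_fintype_card, Fintype.card_fin] at this
    -- if C is nonempty then 2 ≤ a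
    have hCne : 1 ≤ C.ncard → 2 ≤ A.ncard := by
      intro h
      obtain ⟨e, he⟩ := Set.nonempty_of_ncard_ne_zero (s := C) (by omega)
      obtain ⟨i, -, hi, hi1⟩ := hCmem e he
      have : ({i, i + 1} : Set (Fin k)) ⊆ A := by
        rintro x (rfl | rfl)
        · exact hi
        · exact hi1
      calc 2 = ({i, i + 1} : Set (Fin k)).ncard :=
            (Set.ncard_pair ((dsucc_ne_self hk i).symm)).symm
        _ ≤ A.ncard := Set.ncard_le_ncard this (Set.toFinite _)
    -- if a ≤ 2 then c ≤ 1
    have hc1 : A.ncard ≤ 2 → C.ncard ≤ 1 := by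
      intro ha
      rw [Set.ncard_le_one (Set.toFinite _)]
      intro e1 he1 e2 he2
      obtain ⟨i, rfl, hi, hi1⟩ := hCmem e1 he1
      obtain ⟨j, rfl, hj, hj1⟩ := hCmem e2 he2
      have hii : i ≠ i + 1 := (dsucc_ne_self hk i).symm
      have hAeq : A = {i, i + 1} := by
        refine (Set.eq_of_subset_of_ncard_le ?_ ?_ (Set.toFinite _)).symm
        · rintro x (rfl | rfl)
          · exact hi
          · exact hi1
        · rw [Set.ncard_pair hii]; exact ha
      have hjm : j ∈ ({i, i + 1} : Set (Fin k)) := hAeq ▸ hj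
      have hj1m : j + 1 ∈ ({i, i + 1} : Set (Fin k)) := hAeq ▸ hj1
      rcases hjm with rfl | rfl
      · rfl
      · exfalso
        rcases hj1m with h | h
        · exact dsucc2_ne_self hk i h
        · exact hii (add_right_cancel h).symm
    -- final arithmetic
    have hsplit2 : C.ncard ≤ 1 ∨ 3 ≤ A.ncard := by
      rcases le_or_gt A.ncard 2 with ha | ha
      · exact Or.inl (hc1 ha)
      · exact Or.inr ha
    have hCge : C.ncard = 0 ∨ 2 ≤ A.ncard := by
      rcases Nat.eq_zero_or_pos C.ncard with h0 | h1
      · exact Or.inl h0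
      · exact Or.inr (hCne h1)
    rw [hecard] at hE ⊢
    rw [hvcard]
    push_cast
    rcases (show P.ncard = 0 ∨ P.ncard = 1 ∨ P.ncard = 2 by omega) with h | h | h <;>
      rw [h] at hsap <;> rcases hsplit2 with h2 | h2 <;> rcases hCge with h3 | h3 <;> omega
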